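/- Let G be a finite group and H ≤ G a nilpotent subgroup. If |HP| divides |G| for every Sylow subgroup P of G (Sylow p-subgroups for every prime p), then H is subnormal in G. -/

import Mathlib

open scoped Pointwise

/-- `H` is subnormal in `G` if there is a finite chain
`H = c 0 ⊴ c 1 ⊴ ... ⊴ c n = G` with each term normal in the next. -/
def IsSubnormal {G : Type*} [Group G] (H : Subgroup G) : Prop :=
  ∃ (n : ℕ) (c : Fin (n + 1) → Subgroup G),
    c 0 = H ∧ c (Fin.last n) = ⊤ ∧
    ∀ i : Fin n, c i.castSucc ≤ c i.succ ∧ ((c i.castSucc).subgroupOf (c i.succ)).Normal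

/-- The cardinality of the product set `H * K` equals `|H : H ∩ K| * |K|`. -/
lemma card_set_mul {G : Type*} [Group G] (H K : Subgroup G) :
    Nat.card ↥((H : Set G) * (K : Set G)) = K.relIndex H * Nat.card K := by
  classical
  have e : ((↥H ⧸ K.subgroupOf H) × ↥K) ≃ ↥((H : Set G) * (K : Set G)) := by
    refine Equiv.ofBijective
      (fun ck => ⟨(ck.1.out : G) * ck.2, Set.mul_mem_mul ck.1.out.2 ck.2.2⟩) ⟨?_, ?_⟩
    · rintro ⟨c₁, k₁⟩ ⟨c₂, k₂⟩ hq
      have hq' : (c₁.out : G) * k₁ = (c₂.out : G) * k₂ := congrArg Subtype.val hq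
      have hG : ((c₂.out : G))⁻¹ * (c₁.out : G) = (k₂ : G) * (k₁ : G)⁻¹ := by
        have h2 := congrArg (fun x => ((c₂.out : G))⁻¹ * x * (k₁ : G)⁻¹) hq'
        simpa [mul_assoc] using h2
      have hmem : (c₂.out)⁻¹ * c₁.out ∈ K.subgroupOf H := by
        rw [Subgroup.mem_subgroupOf]
        simp only [Subgroup.coe_mul, InvMemClass.coe_inv]
        rw [hG]
        exact mul_mem k₂.2 (inv_mem k₁.2)
      have hc : c₂ = c₁ := by
        rw [← QuotientGroup.out_eq' c₁, ← QuotientGroup.out_eq' c₂, QuotientGroup.eq]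
        exact hmem
      subst hc
      have hk : k₁ = k₂ := by
        apply Subtype.ext
        exact mul_left_cancel hq'
      rw [hk]
    · rintro ⟨x, hx⟩
      rw [Set.mem_mul] at hx
      obtain ⟨a, ha, b, hb, rfl⟩ := hx
      set c : ↥H ⧸ K.subgroupOf H := QuotientGroup.mk ⟨a, ha⟩ with hc
      have hmem : (c.out)⁻¹ * ⟨a, ha⟩ ∈ K.subgroupOf H := by
        rw [← QuotientGroup.eq]
        rw [QuotientGroup.out_eq']
      rw [Subgroup.mem_subgroupOf] at hmem
      refine ⟨⟨c, ⟨_ * b, mul_mem hmem hb⟩⟩, ?_⟩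
      apply Subtype.ext
      simp [mul_assoc]
  rw [← Nat.card_congr e, Nat.card_prod]
  rfl

/-- If `|HP|` divides `|G|`, then `H ∩ P` is a Sylow `p`-subgroup of `H`. -/
lemma subgroupOf_sylow {G : Type*} [Group G] [Finite G] (H : Subgroup G) (p : ℕ)
    [Fact p.Prime] (P : Sylow p G)
    (hdvd : Nat.card ↥((H : Set G) * ((P : Subgroup G) : Set G)) ∣ Nat.card G) :
    ∃ R : Sylow p ↥H, ((P : Subgroup G).subgroupOf H) = R := by
  have hrel : ¬ p ∣ (P : Subgroup G).relIndex H := by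
    rw [card_set_mul] at hdvd
    have hGcard : Nat.card (P : Subgroup G) * (P : Subgroup G).index = Nat.card G :=
      Subgroup.card_mul_index _
    have hdvd2 : (P : Subgroup G).relIndex H ∣ (P : Subgroup G).index := by
      refine (Nat.mul_dvd_mul_iff_left
        (show 0 < Nat.card (P : Subgroup G) from Nat.card_pos)).mp ?_
      rw [← hGcard, mul_comm (Nat.card (P : Subgroup G))] at hdvd
      simpa [mul_comm] using hdvd
    exact fun hp => P.not_dvd_index (hp.trans hdvd2)
  set S := (P : Subgroup G).subgroupOf H with hS
  have hpS : IsPGroup p ↥S :=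
    IsPGroup.comap_of_injective P.isPGroup' H.subtype Subtype.coe_injective
  obtain ⟨R, hR⟩ := hpS.exists_le_sylow
  have hidx : ¬ p ∣ S.index := hrel
  have h1 : S.relIndex ↑R = 1 := by
    have d1 : S.relIndex ↑R ∣ S.index :=
      ⟨(R : Subgroup ↥H).index, (Subgroup.relIndex_mul_index hR).symm⟩
    have d2 : S.relIndex ↑R ∣ Nat.card ↥(R : Subgroup ↥H) :=
      Subgroup.index_dvd_card _
    rw [R.card_eq_multiplicity] at d2
    obtain ⟨m, -, hm⟩ := (Nat.dvd_prime_pow (Fact.out : p.Prime)).mp d2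
    rw [hm] at d1 ⊢
    match m with
    | 0 => rfl
    | (k+1) => exact absurd (dvd_trans (dvd_pow_self p (Nat.succ_ne_zero k)) d1) hidx
  exact ⟨R, le_antisymm hR (Subgroup.relIndex_eq_one.mp h1)⟩

/-- For a nilpotent subgroup `H`, the intersections with any two Sylow `p`-subgroups agree. -/
lemma inter_sylow_eq {G : Type*} [Group G] [Finite G] (H : Subgroup G)
    (hnil : Group.IsNilpotent H) (p : ℕ) [Fact p.Prime] (P Q : Sylow p G)
    (hP : Nat.card ↥((H : Set G) * ((P : Subgroup G) : Set G)) ∣ Nat.card G)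
    (hQ : Nat.card ↥((H : Set G) * ((Q : Subgroup G) : Set G)) ∣ Nat.card G) :
    (P : Subgroup G) ⊓ H = (Q : Subgroup G) ⊓ H := by
  have hsub : Subsingleton (Sylow p ↥H) := by
    have h4 : ∀ (q : ℕ) (_hq : Fact q.Prime) (R : Sylow q ↥H), (R : Subgroup ↥H).Normal :=
      ((isNilpotent_of_finite_tfae (G := ↥H)).out 0 3 (by norm_num) (by norm_num)).mp hnil
    have hnorm : ∀ R : Sylow p ↥H, (R : Subgroup ↥H).Normal := fun R => h4 p ‹_› R
    haveI := Sylow.unique_of_normal (default : Sylow p ↥H) (hnorm default)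
    infer_instance
  obtain ⟨R₁, h1⟩ := subgroupOf_sylow H p P hP
  obtain ⟨R₂, h2⟩ := subgroupOf_sylow H p Q hQ
  have heq : ((P : Subgroup G).subgroupOf H) = ((Q : Subgroup G).subgroupOf H) := by
    rw [h1, h2, Subsingleton.elim R₁ R₂]
  calc (P : Subgroup G) ⊓ H = ((P : Subgroup G).subgroupOf H).map H.subtype := by
        rw [Subgroup.subgroupOf_map_subtype]
    _ = ((Q : Subgroup G).subgroupOf H).map H.subtype := by rw [heq]
    _ = (Q : Subgroup G) ⊓ H := by rw [Subgroup.subgroupOf_map_subtype]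

/-- The `p`-core `⋂ P ∈ Sylₚ(G), P` is normal. -/
lemma iInf_sylow_normal {G : Type*} [Group G] (p : ℕ) :
    (⨅ (P : Sylow p G), (P : Subgroup G)).Normal := by
  constructor
  intro x hx g
  rw [Subgroup.mem_iInf] at hx ⊢
  intro P
  have hmem := hx (g⁻¹ • P)
  have hcoe : ((g⁻¹ • P : Sylow p G) : Subgroup G) = MulAut.conj g⁻¹ • (P : Subgroup G) := by
    rw [Sylow.smul_def, Sylow.pointwise_smul_def, map_inv]
  rw [hcoe, Subgroup.mem_pointwise_smul_iff_inv_smul_mem] at hmem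
  simpa [MulAut.conj] using hmem

/-- If `K ≤ L` and `L` normalizes `K`, then `K` is normal in `L`. -/
lemma normal_subgroupOf_of_le_normalizer {G : Type*} [Group G] {K L : Subgroup G}
    (h2 : L ≤ Subgroup.normalizer (K : Set G)) : (K.subgroupOf L).Normal := by
  constructor
  rintro ⟨n, hnL⟩ hn ⟨g, hgL⟩
  rw [Subgroup.mem_subgroupOf] at hn ⊢
  simpa using (Subgroup.mem_normalizer_iff.mp (h2 hgL) n).mp hn

/-- Kegel–Wielandt for nilpotent subgroups: if `H` is a nilpotent subgroup of the finite
group `G` and `|HP|` divides `|G|` for every Sylow subgroup `P` of `G`, then `H` is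
subnormal in `G`. -/
theorem isSubnormal_of_nilpotent_of_forall_sylow {G : Type*} [Group G] [Finite G]
    (H : Subgroup G) (hnil : Group.IsNilpotent H)
    (h : ∀ (p : ℕ) [Fact p.Prime] (P : Sylow p G),
      Nat.card ↥((H : Set G) * ((P : Subgroup G) : Set G)) ∣ Nat.card G) :
    IsSubnormal H := by
  classical
  set ι := ((Nat.card G).primeFactors : Finset ℕ)
  have instfact : ∀ p : ι, Fact (Nat.Prime (p : ℕ)) :=
    fun p => ⟨Nat.prime_of_mem_primeFactors p.2⟩
  set Op : ι → Subgroup G := fun p => ⨅ (P : Sylow (p : ℕ) G), (P : Subgroup G) with hOp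
  have hOpnormal : ∀ p : ι, (Op p).Normal := fun p => iInf_sylow_normal (p : ℕ)
  have hOppgroup : ∀ p : ι, IsPGroup (p : ℕ) (Op p) := by
    intro p
    haveI := instfact p
    exact (default : Sylow (p : ℕ) G).isPGroup'.to_le (iInf_le _ default)
  -- pairwise commuting
  have hcomm : Pairwise fun i j : ι => ∀ x y : G, x ∈ Op i → y ∈ Op j → Commute x y := by
    intro i j hij x y hx hy
    haveI := instfact i; haveI := instfact j
    have hdisj : Disjoint (Op i) (Op j) :=
      IsPGroup.disjoint_of_ne (i : ℕ) (j : ℕ) (Subtype.coe_injective.ne hij) _ _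
        (hOppgroup i) (hOppgroup j)
    have hci : x * y * x⁻¹ * y⁻¹ ∈ Op i := by
      have h1 : y * x⁻¹ * y⁻¹ ∈ Op i := (hOpnormal i).conj_mem _ (inv_mem hx) y
      have := mul_mem hx h1
      simpa [mul_assoc] using this
    have hcj : x * y * x⁻¹ * y⁻¹ ∈ Op j := by
      have h1 : x * y * x⁻¹ ∈ Op j := (hOpnormal j).conj_mem _ hy x
      exact mul_mem h1 (inv_mem hy)
    have : x * y * x⁻¹ * y⁻¹ ∈ (Op i) ⊓ (Op j) := ⟨hci, hcj⟩
    rw [hdisj.eq_bot] at this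
    have h1 : @Bracket.bracket G G commutatorElement x y = 1 := this
    exact commutatorElement_eq_one_iff_commute.mp h1
  set F : Subgroup G := ⨆ p : ι, Op p with hF
  have hFnormal : F.Normal := by
    constructor
    intro x hx g
    refine Subgroup.iSup_induction (C := fun x => g * x * g⁻¹ ∈ F) Op hx
      (fun i x hxi => Subgroup.mem_iSup_of_mem i ((hOpnormal i).conj_mem x hxi g))
      (by simpa using one_mem F) ?_
    intro x y hx hy
    have h2 : (g * x * g⁻¹) * (g * y * g⁻¹) = g * (x * y) * g⁻¹ := by group
    rw [← h2]
    exact mul_mem hx hy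
  -- H is contained in F
  have hHF : H ≤ F := by
    set Sp : ι → Subgroup G := fun p =>
      ((default : Sylow (p : ℕ) G) : Subgroup G) ⊓ H with hSp
    have hSpOp : ∀ p : ι, Sp p ≤ Op p := by
      intro p
      haveI := instfact p
      refine le_iInf fun Q => ?_
      have := inter_sylow_eq H hnil (p : ℕ) default Q (h (p : ℕ) default) (h (p : ℕ) Q)
      rw [hSp]
      exact this.le.trans inf_le_left
    have hSpcard : ∀ p : ι, Nat.card (Sp p) = (p : ℕ) ^ (Nat.card ↥H).factorization (p : ℕ) := by
      intro p
      haveI := instfact p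
      obtain ⟨R, hR⟩ := subgroupOf_sylow H (p : ℕ) default (h (p : ℕ) default)
      have h1 : (Sp p).subgroupOf H = (R : Subgroup ↥H) := by
        rw [hSp]
        rw [Subgroup.inf_subgroupOf_right]
        exact hR
      have h2 : Nat.card (Sp p) = Nat.card ((Sp p).subgroupOf H) :=
        (Nat.card_congr (Subgroup.subgroupOfEquivOfLe (inf_le_right :
          Sp p ≤ H)).toEquiv).symm
      rw [h2, h1, R.card_eq_multiplicity]
    set K' : Subgroup G := ⨆ p : ι, Sp p with hK'
    have hK'H : K' ≤ H := iSup_le fun p => inf_le_right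
    have hHK' : Nat.card ↥H ∣ Nat.card K' := by
      rw [← Nat.factorization_le_iff_dvd Nat.card_pos.ne' Nat.card_pos.ne']
      rw [Finsupp.le_def]
      intro q
      by_cases hq : (Nat.card ↥H).factorization q = 0
      · simp [hq]
      · have hqmem : q ∈ (Nat.card ↥H).primeFactors := by
          rw [← Nat.support_factorization]
          exact Finsupp.mem_support_iff.mpr hq
        have hqι : q ∈ ι := by
          refine Nat.primeFactors_mono ?_ Nat.card_pos.ne' hqmem
          exact Subgroup.card_subgroup_dvd_card H
        haveI : Fact q.Prime := ⟨Nat.prime_of_mem_primeFactors hqmem⟩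
        have hdvd : q ^ (Nat.card ↥H).factorization q ∣ Nat.card K' := by
          have := Subgroup.card_dvd_of_le (le_iSup Sp ⟨q, hqι⟩)
          rwa [hSpcard ⟨q, hqι⟩] at this
        exact (Nat.Prime.pow_dvd_iff_le_factorization (Fact.out : q.Prime)
          Nat.card_pos.ne').mp hdvd
    have hK'eq : K' = H := by
      have h1 : Nat.card K' = Nat.card ↥H :=
        Nat.dvd_antisymm (Subgroup.card_dvd_of_le hK'H) hHK'
      have h2 : Nat.card (K'.subgroupOf H) = Nat.card ↥H := by
        rw [Nat.card_congr (Subgroup.subgroupOfEquivOfLe hK'H).toEquiv]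
        exact h1
      have h3 : K'.subgroupOf H = ⊤ := Subgroup.eq_top_of_card_eq _ h2
      have h4 : H ≤ K' := by
        intro x hx
        have := h3 ▸ (Subgroup.mem_top (⟨x, hx⟩ : ↥H))
        exact (Subgroup.mem_subgroupOf).mp this
      exact le_antisymm hK'H h4
    rw [← hK'eq]
    exact iSup_le fun p => (hSpOp p).trans (le_iSup Op p)
  -- F is nilpotent
  haveI hFnil : Group.IsNilpotent ↥F := by
    haveI : ∀ p : ι, Group.IsNilpotent (Op p) := by
      intro p
      haveI := instfact p
      exact (hOppgroup p).isNilpotent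
    have φrange := Subgroup.noncommPiCoprod_range (hcomm := hcomm)
    have : Group.IsNilpotent ↥((Subgroup.noncommPiCoprod hcomm).range) :=
      nilpotent_of_surjective _ (Subgroup.noncommPiCoprod hcomm).rangeRestrict_surjective
    rwa [φrange] at this
  -- the subnormal chain via the upper central series of F
  set d := Group.nilpotencyClass ↥F with hd
  set Z : ℕ → Subgroup G := fun j => (upperCentralSeries ↥F j).map F.subtype with hZ
  have hZ0 : Z 0 = ⊥ := by rw [hZ]; exact Subgroup.map_bot _
  have hZd : Z d = F := by
    have htop : upperCentralSeries ↥F d = ⊤ := by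
      rw [hd]; exact upperCentralSeries_nilpotencyClass
    show Subgroup.map F.subtype (upperCentralSeries ↥F d) = F
    rw [htop, ← MonoidHom.range_eq_map, Subgroup.range_subtype]
  have hZF : ∀ j, Z j ≤ F := fun j => Subgroup.map_subtype_le _
  have hZmono : ∀ j, Z j ≤ Z (j + 1) :=
    fun j => Subgroup.map_mono (upperCentralSeries_mono ↥F (Nat.le_succ j))
  have hconj : ∀ j, ∀ z ∈ Z (j + 1), ∀ k ∈ H ⊔ Z j, z * k * z⁻¹ ∈ H ⊔ Z j := by
    intro j z hz k hk
    have hkF : k ∈ F := (sup_le hHF (hZF j)) hk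
    rw [hZ, Subgroup.mem_map] at hz
    obtain ⟨z', hz', rfl⟩ := hz
    have hw : z' * ⟨k, hkF⟩ * z'⁻¹ * (⟨k, hkF⟩ : ↥F)⁻¹ ∈ upperCentralSeries ↥F j :=
      (mem_upperCentralSeries_succ_iff.mp hz') ⟨k, hkF⟩
    have hwZ : ((z' : G) * k * (z' : G)⁻¹ * k⁻¹ : G) ∈ Z j :=
      Subgroup.mem_map_of_mem F.subtype hw
    show (z' : G) * k * ((z' : G))⁻¹ ∈ H ⊔ Z j
    have heq : (z' : G) * k * (z' : G)⁻¹ = ((z' : G) * k * (z' : G)⁻¹ * k⁻¹) * k := by group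
    rw [heq]
    exact mul_mem (Subgroup.mem_sup_right hwZ) hk
  have hnormalizer : ∀ j, H ⊔ Z (j + 1) ≤ Subgroup.normalizer ((H ⊔ Z j : Subgroup G) : Set G) := by
    intro j
    refine sup_le (le_trans le_sup_left Subgroup.le_normalizer) ?_
    intro z hz
    rw [Subgroup.mem_normalizer_iff]
    intro y
    constructor
    · exact fun hy => hconj j z hz y hy
    · intro hy
      have := hconj j z⁻¹ (inv_mem hz) _ hy
      have h2 : z⁻¹ * (z * y * z⁻¹) * z⁻¹⁻¹ = y := by group
      rwa [h2] at this
  -- assemble the chain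
  refine ⟨d + 1, fun i => if (i : ℕ) = d + 1 then ⊤ else H ⊔ Z (i : ℕ), ?_, ?_, ?_⟩
  · simp only [Fin.val_zero]
    simp [hZ0, (Nat.succ_ne_zero d).symm]
  · simp [Fin.val_last]
  · intro i
    have hival : (i : ℕ) ≤ d := Nat.lt_succ_iff.mp i.2
    simp only [Fin.coe_castSucc, Fin.val_succ]
    rw [if_neg (by omega : ¬((i : ℕ) = d + 1))]
    show (H ⊔ Z (i : ℕ) ≤ if (i : ℕ) + 1 = d + 1 then ⊤ else H ⊔ Z ((i : ℕ) + 1)) ∧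
      ((H ⊔ Z (i : ℕ)).subgroupOf (if (i : ℕ) + 1 = d + 1 then ⊤ else H ⊔ Z ((i : ℕ) + 1))).Normal
    by_cases hi : (i : ℕ) = d
    · rw [if_pos (by omega : (i : ℕ) + 1 = d + 1)]
      have hF' : (H ⊔ Z (i : ℕ)) = F := by rw [hi, hZd, sup_eq_right.mpr hHF]
      rw [hF']
      exact ⟨le_top, normal_subgroupOf_of_le_normalizer
        (le_of_eq (Subgroup.normalizer_eq_top_iff.mpr hFnormal).symm)⟩
    · rw [if_neg (by omega : ¬((i : ℕ) + 1 = d + 1))]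
      exact ⟨sup_le_sup_left (hZmono (i : ℕ)) _,
        normal_subgroupOf_of_le_normalizer (hnormalizer (i : ℕ))⟩
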